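/- Let X be a collectionwise normal space and 𝒰 an open cover of X. Then 𝒰 admits a 𝒰-small partition of unity if and only if 𝒰 has a point-finite open refinement. -/

import Mathlib

noncomputable section
open Set Topology TopologicalSpace

/-- `𝒰` is an open cover of `X`. -/
def IsOpenCover {X : Type} [TopologicalSpace X] (𝒰 : Set (Set X)) : Prop :=
  (∀ U ∈ 𝒰, IsOpen U) ∧ ⋃₀ 𝒰 = univ

/-- Star of a point with respect to a family of sets. -/
def ptStar {X : Type} (x : X) (𝒰 : Set (Set X)) : Set X := ⋃₀ {U | U ∈ 𝒰 ∧ x ∈ U}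

/-- Star of a set with respect to a family of sets. -/
def setStar {X : Type} (A : Set X) (𝒰 : Set (Set X)) : Set X :=
  ⋃₀ {U | U ∈ 𝒰 ∧ (U ∩ A).Nonempty}

/-- `𝒱` star-refines `𝒰`. -/
def StarRefines {X : Type} (𝒱 𝒰 : Set (Set X)) : Prop :=
  ∀ x : X, ∃ U ∈ 𝒰, ptStar x 𝒱 ⊆ U

/-- A continuous partition of unity viewed as a map into `l¹(S)` with image in `Δ(S)`. -/
def IsPU {X S : Type} [TopologicalSpace X] (f : X → lp (fun _ : S => ℝ) 1) : Prop :=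
  Continuous f ∧ ∀ x : X, (∀ s : S, 0 ≤ f x s) ∧ HasSum (fun s => f x s) 1

/-- The partition of unity `f` is `𝒰`-small: each carrier lies in a member of `𝒰`. -/
def IsUSmall {X S : Type} [TopologicalSpace X] (𝒰 : Set (Set X))
    (f : X → lp (fun _ : S => ℝ) 1) : Prop :=
  ∀ s : S, ∃ U ∈ 𝒰, {x : X | f x s ≠ 0} ⊆ U

/-- There exists a `𝒰`-small partition of unity on `X`. -/
def ExistsUSmallPU {X : Type} [TopologicalSpace X] (𝒰 : Set (Set X)) : Prop :=
  ∃ (S : Type) (f : X → lp (fun _ : S => ℝ) 1), IsPU f ∧ IsUSmall 𝒰 f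

/-- An indexed family of sets is discrete. -/
def DiscreteFam {X S : Type} [TopologicalSpace X] (A : S → Set X) : Prop :=
  ∀ x : X, ∃ N ∈ nhds x, {s : S | (A s ∩ N).Nonempty}.Subsingleton

/-- A family of sets (as a set of sets) is discrete. -/
def DiscreteSetFam {X : Type} [TopologicalSpace X] (𝒜 : Set (Set X)) : Prop :=
  ∀ x : X, ∃ N ∈ nhds x, {A | A ∈ 𝒜 ∧ (A ∩ N).Nonempty}.Subsingleton

/-- `𝒰` has a σ-discrete closed refinement. -/
def HasSigmaDiscreteClosedRefinement {X : Type} [TopologicalSpace X]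
    (𝒰 : Set (Set X)) : Prop :=
  ∃ D : ℕ → Set (Set X), (∀ n, DiscreteSetFam (D n)) ∧
    (∀ n, ∀ F ∈ D n, IsClosed F) ∧
    (∀ n, ∀ F ∈ D n, ∃ U ∈ 𝒰, F ⊆ U) ∧
    ⋃₀ (⋃ n, D n) = univ

/-- `X` is collectionwise normal. -/
def CwNormal (X : Type) [TopologicalSpace X] : Prop :=
  ∀ (S : Type) (A : S → Set X), (∀ s, IsClosed (A s)) → DiscreteFam A →
    ∃ V : S → Set X, (∀ s, IsOpen (V s)) ∧ (∀ s, A s ⊆ V s) ∧ DiscreteFam V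

section Aux

set_option linter.unusedSectionVars false

variable {X : Type} [TopologicalSpace X]

lemma subsingleton_of_compl {S : Type} (A : S → Set X) (N : Set X) (s₀ : S)
    (h : ∀ s, s ≠ s₀ → A s ∩ N = ∅) : {s : S | (A s ∩ N).Nonempty}.Subsingleton := by
  intro a ha b hb
  by_contra hab
  rcases ne_or_eq a s₀ with h1 | rfl
  · have := h a h1
    simp only [Set.mem_setOf_eq, this, Set.not_nonempty_empty] at ha
  · have hb0 : b ≠ a := fun e => hab e.symm
    have := h b hb0
    simp only [Set.mem_setOf_eq, this, Set.not_nonempty_empty] at hb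

lemma CwNormal.normal (hX : CwNormal X) : NormalSpace X := by
  constructor
  intro s t hs ht hd
  set A : Bool → Set X := fun b => if b then s else t with hA
  have hcl : ∀ b, IsClosed (A b) := by rintro (_|_) <;> simpa [hA]
  have hdisc : DiscreteFam A := by
    intro x
    by_cases hxs : x ∈ s
    · have hxt : x ∉ t := fun h => disjoint_left.1 hd hxs h
      refine ⟨tᶜ, ht.isOpen_compl.mem_nhds hxt, subsingleton_of_compl A tᶜ true ?_⟩
      rintro (_|_) hb
      · simp [hA, Set.inter_compl_self]
      · exact absurd rfl hb
    · by_cases hxt : x ∈ t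
      · refine ⟨sᶜ, hs.isOpen_compl.mem_nhds hxs, subsingleton_of_compl A sᶜ false ?_⟩
        rintro (_|_) hb
        · exact absurd rfl hb
        · simp [hA, Set.inter_compl_self]
      · refine ⟨(s ∪ t)ᶜ, ((hs.union ht).isOpen_compl).mem_nhds (by simp [hxs, hxt]), ?_⟩
        have : ∀ b, A b ∩ (s ∪ t)ᶜ = ∅ := by
          rintro (_|_) <;>
          · simp only [hA]
            rw [Set.eq_empty_iff_forall_notMem]
            rintro z ⟨hz1, hz2⟩
            simp only [Set.mem_compl_iff, Set.mem_union] at hz2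
            simp_all
        refine subsingleton_of_compl A _ true (fun b _ => this b)
  obtain ⟨V, hVo, hAV, hVd⟩ := hX Bool A hcl hdisc
  refine ⟨V true, V false, hVo _, hVo _, by simpa [hA] using hAV true,
    by simpa [hA] using hAV false, ?_⟩
  rw [disjoint_left]
  intro z hzt hzf
  obtain ⟨N, hN, hsub⟩ := hVd z
  have : (true : Bool) = false :=
    hsub (⟨z, hzt, mem_of_mem_nhds hN⟩ : (V true ∩ N).Nonempty) ⟨z, hzf, mem_of_mem_nhds hN⟩
  simp at this


variable {S : Type}

lemma lp1_hasSum_norm (u : lp (fun _ : S => ℝ) 1) : HasSum (fun s => |u s|) ‖u‖ := by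
  have h := lp.hasSum_norm (p := 1) (by norm_num) u
  simpa using h

lemma lp1_apply_abs_le (u : lp (fun _ : S => ℝ) 1) (s : S) : |u s| ≤ ‖u‖ := by
  simpa [Real.norm_eq_abs] using lp.norm_apply_le_norm (E := fun _ : S => ℝ) one_ne_zero u s

lemma lp1_continuous_eval (s : S) : Continuous fun u : lp (fun _ : S => ℝ) 1 => u s := by
  have : LipschitzWith 1 fun u : lp (fun _ : S => ℝ) 1 => u s := by
    intro u v
    simp only [ENNReal.coe_one, one_mul, edist_dist]
    apply ENNReal.ofReal_le_ofReal
    have : |(u - v) s| ≤ ‖u - v‖ := lp1_apply_abs_le _ s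
    simpa [dist_eq_norm, Real.dist_eq, lp.coeFn_sub, Pi.sub_apply] using this
  exact this.continuous

lemma lp1_single_sub [DecidableEq S] (s : S) (a b : ℝ) :
    lp.single (E := fun _ : S => ℝ) 1 s a - lp.single 1 s b = lp.single 1 s (a - b) := by
  apply lp.ext
  funext j
  by_cases h : j = s
  · subst h; simp [lp.single_apply_self]
  · simp [lp.single_apply_ne _ _ _ h]

lemma lp1_norm_single [DecidableEq S] (s : S) (a : ℝ) :
    ‖lp.single (E := fun _ : S => ℝ) 1 s a‖ = |a| := by
  have := lp.norm_single (E := fun _ : S => ℝ) (p := 1) (by norm_num) s a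
  simpa using this

lemma lp1_continuous_single [DecidableEq S] {Y : Type} [TopologicalSpace Y] (s : S)
    {r : Y → ℝ} (hr : Continuous r) :
    Continuous fun y => lp.single (E := fun _ : S => ℝ) 1 s (r y) := by
  have hL : LipschitzWith 1 (fun a : ℝ => lp.single (E := fun _ : S => ℝ) 1 s a) := by
    intro a b
    simp only [ENNReal.coe_one, one_mul, edist_dist]
    apply ENNReal.ofReal_le_ofReal
    simp [dist_eq_norm, lp1_single_sub, lp1_norm_single, Real.dist_eq, -lp.single_sub]
  exact hL.continuous.comp hr

/-- The evaluation at a coordinate as an additive monoid hom. -/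
def lp1_evalAM (s : S) : lp (fun _ : S => ℝ) 1 →+ ℝ where
  toFun u := u s
  map_zero' := by simp [lp.coeFn_zero]
  map_add' u v := by simp [lp.coeFn_add]

lemma pu_of_sigma_discrete {X : Type} [TopologicalSpace X] (hn : NormalSpace X)
    (𝒰 : Set (Set X)) (I : ℕ → Type) (W A : ∀ n, I n → Set X)
    (hWo : ∀ n t, IsOpen (W n t)) (hAc : ∀ n t, IsClosed (A n t))
    (hAW : ∀ n t, A n t ⊆ W n t) (href : ∀ n t, ∃ U ∈ 𝒰, W n t ⊆ U)
    (hdisc : ∀ n, DiscreteFam (W n)) (hcov : (⋃ n, ⋃ t, A n t) = univ) :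
    ExistsUSmallPU 𝒰 := by
  classical
  haveI := hn
  set S := Σ n : ℕ, I n with hS
  -- Urysohn functions
  have hUry : ∀ (n : ℕ) (t : I n), ∃ g : C(X, ℝ),
      EqOn g 0 ((W n t)ᶜ) ∧ EqOn g 1 (A n t) ∧ ∀ x, g x ∈ Icc (0:ℝ) 1 := by
    intro n t
    exact exists_continuous_zero_one_of_isClosed (hWo n t).isClosed_compl (hAc n t)
      (disjoint_left.2 fun x hx hxA => hx (hAW n t hxA))
  choose g hg0 hg1 hg01 using hUry
  set φ : ∀ n : ℕ, I n → X → ℝ := fun n t x => (2:ℝ)⁻¹ ^ n * g n t x with hφ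
  have hφ_nonneg : ∀ n t x, 0 ≤ φ n t x := fun n t x =>
    mul_nonneg (by positivity) (hg01 n t x).1
  have hφ_le : ∀ n t x, φ n t x ≤ (2:ℝ)⁻¹ ^ n := fun n t x => by
    have := (hg01 n t x).2
    calc (2:ℝ)⁻¹ ^ n * g n t x ≤ (2:ℝ)⁻¹ ^ n * 1 := by
          apply mul_le_mul_of_nonneg_left this (by positivity)
      _ = (2:ℝ)⁻¹ ^ n := mul_one _
  have hφ_mem : ∀ n t x, φ n t x ≠ 0 → x ∈ W n t := by
    intro n t x h
    by_contra hx
    exact h (by simp [hφ, hg0 n t hx])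
  -- coordinates of the level-n map
  set c : ℕ → X → S → ℝ := fun n x s => if s.1 = n then φ s.1 s.2 x else 0 with hc
  have hc_supp : ∀ n x, {s : S | c n x s ≠ 0}.Subsingleton := by
    intro n x
    rintro ⟨m, t⟩ hmt ⟨m', t'⟩ hmt'
    simp only [mem_setOf_eq, hc, ne_eq, ite_eq_right_iff, not_forall] at hmt hmt'
    obtain ⟨h1e, h1⟩ := hmt
    obtain ⟨h2e, h2⟩ := hmt'
    have hw1 : x ∈ W m t := hφ_mem _ _ _ h1
    have hw2 : x ∈ W m' t' := hφ_mem _ _ _ h2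
    subst h1e
    subst h2e
    obtain ⟨N, hN, hsub⟩ := hdisc _ x
    have e : t = t' := hsub ⟨x, hw1, mem_of_mem_nhds hN⟩ ⟨x, hw2, mem_of_mem_nhds hN⟩
    subst e
    rfl
  have hc_mem : ∀ n x, Memℓp (c n x) 1 :=
    fun n x => (memℓp_zero ((hc_supp n x).finite)).of_exponent_ge zero_le_one
  set Φ : ℕ → X → lp (fun _ : S => ℝ) 1 := fun n x => ⟨c n x, hc_mem n x⟩ with hΦ
  have hΦ_apply : ∀ n x s, (Φ n x) s = c n x s := fun n x s => rfl
  -- norm bound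
  have hΦ_norm : ∀ n x, ‖Φ n x‖ ≤ (2:ℝ)⁻¹ ^ n := by
    intro n x
    by_cases h : ∃ s : S, c n x s ≠ 0
    · obtain ⟨s₀, hs₀⟩ := h
      have hsum : HasSum (fun s => |(Φ n x) s|) |c n x s₀| := by
        refine hasSum_single s₀ fun b hb => ?_
        have : c n x b = 0 := by
          by_contra hbne
          exact hb (hc_supp n x hbne hs₀)
        simp [hΦ_apply, this]
      have heq := (lp1_hasSum_norm (Φ n x)).unique hsum
      rw [heq]
      have habs : ∀ s : S, |c n x s| ≤ (2:ℝ)⁻¹ ^ n := by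
        rintro ⟨m, t⟩
        simp only [hc]
        by_cases hm : m = n
        · subst hm
          rw [if_pos rfl, abs_of_nonneg (hφ_nonneg _ _ _)]
          exact hφ_le _ _ _
        · rw [if_neg hm, abs_zero]
          positivity
      exact habs s₀
    · push_neg at h
      have hsum : HasSum (fun s => |(Φ n x) s|) 0 := by
        convert hasSum_zero with s
        simp [hΦ_apply, h s]
      have := (lp1_hasSum_norm (Φ n x)).unique hsum
      rw [this]; positivity
  -- continuity of each level map
  have hΦ_cont : ∀ n, Continuous (Φ n) := by
    intro n
    rw [continuous_iff_continuousAt]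
    intro x
    obtain ⟨N, hN, hsub⟩ := hdisc n x
    obtain ⟨O, hON, hOopen, hxO⟩ := mem_nhds_iff.1 hN
    by_cases hM : ∃ t₀ : I n, (W n t₀ ∩ O).Nonempty
    · obtain ⟨t₀, ht₀⟩ := hM
      have hloc : ∀ y ∈ O, Φ n y = lp.single 1 (⟨n, t₀⟩ : S) (φ n t₀ y) := by
        intro y hy
        apply lp.ext
        funext s
        rcases eq_or_ne s (⟨n, t₀⟩ : S) with rfl | hne
        · rw [hΦ_apply]
          simp only [hc, if_pos rfl]
          rw [lp.single_apply_self]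
        · rw [hΦ_apply, lp.single_apply_ne _ _ _ hne]
          rcases s with ⟨m, t⟩
          simp only [hc]
          by_cases hm : m = n
          · subst hm
            rw [if_pos rfl]
            by_contra hne0
            have h1 : t ∈ {u : I m | (W m u ∩ N).Nonempty} :=
              ⟨y, hφ_mem _ _ _ hne0, hON hy⟩
            have h2 : t₀ ∈ {u : I m | (W m u ∩ N).Nonempty} :=
              ⟨ht₀.choose, ht₀.choose_spec.1, hON ht₀.choose_spec.2⟩
            exact hne (by rw [hsub h1 h2])
          · rw [if_neg hm]
      have hcont : Continuous fun y => lp.single (E := fun _ : S => ℝ) 1 (⟨n, t₀⟩ : S) (φ n t₀ y) :=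
        lp1_continuous_single _ (continuous_const.mul (g n t₀).continuous)
      exact hcont.continuousAt.congr
        (Filter.eventuallyEq_of_mem (hOopen.mem_nhds hxO) (fun y hy => (hloc y hy).symm))
    · push_neg at hM
      have hloc : ∀ y ∈ O, Φ n y = 0 := by
        intro y hy
        apply lp.ext
        funext s
        rw [hΦ_apply]
        have h0 : (0 : lp (fun _ : S => ℝ) 1) s = 0 := by
          rw [lp.coeFn_zero]; rfl
        rw [h0]
        rcases s with ⟨m, t⟩
        simp only [hc]
        rcases eq_or_ne m n with rfl | hm
        · rw [if_pos rfl]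
          by_contra hne0
          have hmem : y ∈ W m t ∩ O := ⟨hφ_mem _ _ _ hne0, hy⟩
          rw [hM t] at hmem
          exact hmem
        · rw [if_neg hm]
      exact continuousAt_const.congr
        (Filter.eventuallyEq_of_mem (hOopen.mem_nhds hxO) (fun y hy => (hloc y hy).symm))
  -- the total map
  have hgeom : Summable fun n : ℕ => (2:ℝ)⁻¹ ^ n :=
    summable_geometric_of_lt_one (by norm_num) (by norm_num)
  have hΦsummable : ∀ x, Summable fun n => Φ n x :=
    fun x => Summable.of_norm_bounded hgeom (fun n => hΦ_norm n x)
  set Φt : X → lp (fun _ : S => ℝ) 1 := fun x => ∑' n, Φ n x with hΦt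
  have hΦt_hasSum : ∀ x, HasSum (fun n => Φ n x) (Φt x) := fun x => (hΦsummable x).hasSum
  have hΦt_cont : Continuous Φt := continuous_tsum hΦ_cont hgeom (fun n x => hΦ_norm n x)
  -- coordinates of Φt
  have hΦt_apply : ∀ (x : X) (s : S), (Φt x) s = φ s.1 s.2 x := by
    intro x s
    have h1 : HasSum (fun n => (Φ n x) s) ((Φt x) s) :=
      (hΦt_hasSum x).map (lp1_evalAM s) (lp1_continuous_eval s)
    have h2 : HasSum (fun n => (Φ n x) s) ((Φ s.1 x) s) := by
      refine hasSum_single s.1 (fun b hb => ?_)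
      rw [hΦ_apply]
      simp only [hc]
      rw [if_neg (fun h => hb h.symm)]
    have h3 : (Φ s.1 x) s = φ s.1 s.2 x := by
      rw [hΦ_apply]
      simp only [hc, if_pos rfl]
    rw [← h3]
    exact h1.unique h2
  -- norm as sum of coordinates
  have hnorm_sum : ∀ x, HasSum (fun s : S => φ s.1 s.2 x) ‖Φt x‖ := by
    intro x
    have he : (fun s : S => |(Φt x) s|) = fun s : S => φ s.1 s.2 x :=
      funext fun s => by rw [hΦt_apply, abs_of_nonneg (hφ_nonneg _ _ _)]
    exact he ▸ lp1_hasSum_norm (Φt x)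
  -- positivity of the norm
  have hpos : ∀ x, 0 < ‖Φt x‖ := by
    intro x
    have hx : x ∈ ⋃ n, ⋃ t, A n t := hcov ▸ mem_univ x
    obtain ⟨n, t, hxA⟩ : ∃ n t, x ∈ A n t := by simpa using hx
    have h1 : φ n t x = (2:ℝ)⁻¹ ^ n := by
      have := hg1 n t hxA
      simp [hφ, this]
    have hle : φ n t x ≤ ‖Φt x‖ :=
      le_hasSum (hnorm_sum x) (⟨n, t⟩ : S) (fun b _ => hφ_nonneg _ _ _)
    calc (0:ℝ) < (2:ℝ)⁻¹ ^ n := by positivity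
      _ = φ n t x := h1.symm
      _ ≤ _ := hle
  -- the partition of unity
  refine ⟨S, fun x => ‖Φt x‖⁻¹ • Φt x, ⟨?_, ?_⟩, ?_⟩
  · exact (hΦt_cont.norm.inv₀ (fun x => (hpos x).ne')).smul hΦt_cont
  · intro x
    constructor
    · intro s
      rw [lp.coeFn_smul, Pi.smul_apply, smul_eq_mul]
      exact mul_nonneg (inv_nonneg.2 (norm_nonneg _))
        (by rw [hΦt_apply]; exact hφ_nonneg _ _ _)
    · have h1 := (hnorm_sum x).mul_left ‖Φt x‖⁻¹
      rw [inv_mul_cancel₀ (hpos x).ne'] at h1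
      have he : (fun s : S => (‖Φt x‖⁻¹ • Φt x) s) = fun s : S => ‖Φt x‖⁻¹ * φ s.1 s.2 x :=
        funext fun s => by rw [lp.coeFn_smul, Pi.smul_apply, smul_eq_mul, hΦt_apply]
      rw [he]
      exact h1
  · rintro ⟨n, t⟩
    obtain ⟨U, hU, hWU⟩ := href n t
    refine ⟨U, hU, fun x hx => hWU ?_⟩
    simp only [mem_setOf_eq] at hx
    apply hφ_mem n t x
    intro h0
    apply hx
    rw [lp.coeFn_smul, Pi.smul_apply, smul_eq_mul]
    have : (Φt x) (⟨n, t⟩ : S) = φ n t x := hΦt_apply x ⟨n, t⟩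
    rw [this, h0, mul_zero]


variable {X : Type} [TopologicalSpace X]

lemma michael_step (hX : CwNormal X) {𝒱 : Set (Set X)} (hVo : ∀ V ∈ 𝒱, IsOpen V)
    (hpf : ∀ x : X, {V | V ∈ 𝒱 ∧ x ∈ V}.Finite)
    (n : ℕ) (G : Set X) (hGo : IsOpen G)
    (hGn : {x : X | {V | V ∈ 𝒱 ∧ x ∈ V}.ncard ≤ n} ⊆ G) :
    ∃ (W A : {T : Finset (Set X) // ↑T ⊆ 𝒱 ∧ T.card = n + 1} → Set X) (G' : Set X),
      IsOpen G' ∧ {x : X | {V | V ∈ 𝒱 ∧ x ∈ V}.ncard ≤ n + 1} ⊆ G' ∧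
      G' ⊆ G ∪ ⋃ t, A t ∧
      (∀ t, IsOpen (W t)) ∧ (∀ t, IsClosed (A t)) ∧ (∀ t, A t ⊆ W t) ∧
      (∀ t, ∀ V ∈ t.1, W t ⊆ V) ∧ DiscreteFam W := by
  set Tx : X → Set (Set X) := fun x => {V | V ∈ 𝒱 ∧ x ∈ V} with hTx
  set I := {T : Finset (Set X) // ↑T ⊆ 𝒱 ∧ T.card = n + 1} with hI
  set B : I → Set X := fun t =>
    ({x | (Tx x).ncard ≤ n + 1} ∩ ⋂ V ∈ t.1, V) \ G with hB
  have hBTx : ∀ t : I, ∀ x ∈ B t, Tx x = ↑t.1 := by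
    rintro t x ⟨⟨hx1, hx2⟩, _⟩
    simp only [mem_iInter] at hx2
    have hsub : ↑t.1 ⊆ Tx x := fun V hV => ⟨t.2.1 hV, hx2 V hV⟩
    refine (Set.eq_of_subset_of_ncard_le hsub ?_ (hpf x)).symm
    rw [Set.ncard_coe_finset, t.2.2]
    exact hx1
  have hBG : ∀ t : I, B t ∩ G = ∅ := by
    intro t
    rw [Set.eq_empty_iff_forall_notMem]
    rintro x ⟨⟨_, hx2⟩, hx3⟩
    exact hx2 hx3
  set C : I → Set X := fun t => closure (B t) with hC
  have hCG : ∀ t : I, C t ⊆ Gᶜ := fun t =>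
    closure_minimal (fun x hx => hx.2) hGo.isClosed_compl
  -- points outside G have order ≥ n+1
  have hord : ∀ y : X, y ∉ G → n + 1 ≤ (Tx y).ncard := by
    intro y hy
    by_contra h
    push_neg at h
    exact hy (hGn (by simpa [hTx] using Nat.lt_succ_iff.mp h))
  have hmeet : ∀ (t : I) (y : X), y ∉ G →
      (⋂₀ Tx y ∩ B t).Nonempty → Tx y = ↑t.1 := by
    rintro t y hyG ⟨z, hz1, hz2⟩
    have hsub : Tx y ⊆ Tx z := by
      rintro V ⟨hV1, hV2⟩
      exact ⟨hV1, hz1 V ⟨hV1, hV2⟩⟩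
    rw [hBTx t z hz2] at hsub
    refine Set.eq_of_subset_of_ncard_le hsub ?_ (Finset.finite_toSet t.1)
    rw [Set.ncard_coe_finset, t.2.2]
    exact hord y hyG
  have hNopen : ∀ y : X, IsOpen (⋂₀ Tx y) :=
    fun y => (hpf y).isOpen_sInter fun V hV => hVo V hV.1
  have hNmem : ∀ y : X, y ∈ ⋂₀ Tx y := fun y V hV => hV.2
  have hCsub : ∀ t : I, ∀ V ∈ t.1, C t ⊆ V := by
    intro t V hV y hy
    have hyG : y ∉ G := hCG t hy
    have hne : (⋂₀ Tx y ∩ B t).Nonempty := by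
      rw [mem_closure_iff] at hy
      have := hy _ (hNopen y) (hNmem y)
      exact this
    have := hmeet t y hyG hne
    have hVTy : V ∈ Tx y := by rw [this]; exact hV
    exact hVTy.2
  have hCdisc : DiscreteFam C := by
    intro x
    by_cases hxG : x ∈ G
    · refine ⟨G, hGo.mem_nhds hxG, fun t ht t' _ => ?_⟩
      exfalso
      obtain ⟨y, hy1, hy2⟩ := ht
      exact hCG t hy1 hy2
    · refine ⟨⋂₀ Tx x, (hNopen x).mem_nhds (hNmem x), ?_⟩
      rintro t ⟨y, hy1, hy2⟩ t' ⟨y', hy1', hy2'⟩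
      have h1 : (⋂₀ Tx x ∩ B t).Nonempty := by
        have hyy := mem_closure_iff.1 hy1 _ (hNopen x) hy2
        exact hyy
      have h2 : (⋂₀ Tx x ∩ B t').Nonempty := by
        have hyy := mem_closure_iff.1 hy1' _ (hNopen x) hy2'
        exact hyy
      have e1 := hmeet t x hxG h1
      have e2 := hmeet t' x hxG h2
      apply Subtype.ext
      apply Finset.coe_injective
      rw [← e1, ← e2]
  obtain ⟨W₀, hW₀o, hCW₀, hW₀d⟩ := hX I C (fun t => isClosed_closure) hCdisc
  set W : I → Set X := fun t => W₀ t ∩ ⋂ V ∈ t.1, V with hW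
  have hWo' : ∀ t, IsOpen (W t) := by
    intro t
    refine (hW₀o t).inter (isOpen_biInter_finset fun V hV => hVo V (t.2.1 hV))
  have hCW : ∀ t, C t ⊆ W t := by
    intro t y hy
    exact ⟨hCW₀ t hy, by simp only [mem_iInter]; exact fun V hV => hCsub t V hV hy⟩
  have hWd : DiscreteFam W := by
    intro x
    obtain ⟨N, hN, hsub⟩ := hW₀d x
    exact ⟨N, hN, hsub.anti fun t ⟨y, hy1, hy2⟩ => ⟨y, hy1.1, hy2⟩⟩
  haveI := hX.normal
  have hsep : ∀ t : I, ∃ W' : Set X, IsOpen W' ∧ C t ⊆ W' ∧ closure W' ⊆ W t :=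
    fun t => normal_exists_closure_subset isClosed_closure (hWo' t) (hCW t)
  choose W' hW'o hCW' hclW' using hsep
  refine ⟨W, fun t => closure (W' t), G ∪ ⋃ t, W' t,
    hGo.union (isOpen_iUnion fun t => hW'o t), ?_, ?_, hWo',
    fun t => isClosed_closure, fun t => hclW' t, fun t V hV => ?_, hWd⟩
  · intro x hx
    by_cases hxG : x ∈ G
    · exact Or.inl hxG
    · refine Or.inr (mem_iUnion.2 ?_)
      have hcard : (Tx x).ncard = n + 1 :=
        le_antisymm hx (hord x hxG)
      have hfin : (Tx x).Finite := hpf x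
      refine ⟨⟨hfin.toFinset, ?_, ?_⟩, ?_⟩
      · intro V hV
        simp only [Set.Finite.coe_toFinset] at hV
        exact hV.1
      · rw [← hcard, ← Set.ncard_coe_finset hfin.toFinset, Set.Finite.coe_toFinset]
      · apply hCW'
        apply subset_closure
        refine ⟨⟨hx, ?_⟩, hxG⟩
        simp only [mem_iInter]
        intro V hV
        simp only [Set.Finite.mem_toFinset] at hV
        exact hV.2
  · intro x hx
    rcases hx with hx | hx
    · exact Or.inl hx
    · obtain ⟨t, ht⟩ := mem_iUnion.1 hx
      exact Or.inr (mem_iUnion.2 ⟨t, subset_closure ht⟩)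
  · intro y hy
    have := hy.2
    simp only [mem_iInter] at this
    exact this V hV

lemma michael (hX : CwNormal X) (𝒱 : Set (Set X)) (hVo : ∀ V ∈ 𝒱, IsOpen V)
    (hVcov : ⋃₀ 𝒱 = univ) (hpf : ∀ x : X, {V | V ∈ 𝒱 ∧ x ∈ V}.Finite) :
    ∃ (I : ℕ → Type) (W A : ∀ n, I n → Set X),
      (∀ n t, IsOpen (W n t)) ∧ (∀ n t, IsClosed (A n t)) ∧
      (∀ n t, A n t ⊆ W n t) ∧ (∀ n t, ∃ V ∈ 𝒱, W n t ⊆ V) ∧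
      (∀ n, DiscreteFam (W n)) ∧ (⋃ n, ⋃ t, A n t) = univ := by
  classical
  set Tx : X → Set (Set X) := fun x => {V | V ∈ 𝒱 ∧ x ∈ V} with hTx
  set Xle : ℕ → Set X := fun n => {x : X | (Tx x).ncard ≤ n} with hXle
  have hTne : ∀ x : X, (Tx x).Nonempty := by
    intro x
    have : x ∈ ⋃₀ 𝒱 := hVcov ▸ mem_univ x
    obtain ⟨V, hV, hxV⟩ := this
    exact ⟨V, hV, hxV⟩
  have hbase : Xle 0 ⊆ (∅ : Set X) := by
    intro x hx
    simp only [hXle, mem_setOf_eq, Nat.le_zero] at hx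
    rw [Set.ncard_eq_zero (hpf x)] at hx
    exact absurd hx (hTne x).ne_empty
  choose Wf Af Gf hGo' hGsub' hGcl' hWo' hAc' hAW' hWsub' hWd' using
    fun (n : ℕ) (G : Set X) (hGo : IsOpen G) (hGn : Xle n ⊆ G) =>
      michael_step hX hVo hpf n G hGo hGn
  set chain : ∀ n : ℕ, {G : Set X // IsOpen G ∧ Xle n ⊆ G} :=
    fun n => Nat.rec ⟨∅, isOpen_empty, hbase⟩
      (fun m ih => ⟨Gf m ih.1 ih.2.1 ih.2.2,
        hGo' m ih.1 ih.2.1 ih.2.2, hGsub' m ih.1 ih.2.1 ih.2.2⟩) n with hchain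
  set I : ℕ → Type := fun n => {T : Finset (Set X) // ↑T ⊆ 𝒱 ∧ T.card = n + 1} with hI
  set W : ∀ n, I n → Set X :=
    fun n => Wf n (chain n).1 (chain n).2.1 (chain n).2.2 with hWdef
  set A : ∀ n, I n → Set X :=
    fun n => Af n (chain n).1 (chain n).2.1 (chain n).2.2 with hAdef
  have hrec : ∀ n : ℕ, (chain (n+1)).1 ⊆ (chain n).1 ∪ ⋃ t, A n t :=
    fun n => hGcl' n (chain n).1 (chain n).2.1 (chain n).2.2
  have hchaincov : ∀ n : ℕ, (chain n).1 ⊆ ⋃ m, ⋃ t, A m t := by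
    intro n
    induction n with
    | zero => intro x hx; exact absurd hx (by simp [hchain])
    | succ m ih =>
      intro x hx
      rcases hrec m hx with hx' | hx'
      · exact ih hx'
      · obtain ⟨t, ht⟩ := mem_iUnion.1 hx'
        exact mem_iUnion.2 ⟨m, mem_iUnion.2 ⟨t, ht⟩⟩
  refine ⟨I, W, A, fun n => hWo' n _ _ _, fun n => hAc' n _ _ _, fun n => hAW' n _ _ _,
    ?_, fun n => hWd' n _ _ _, ?_⟩
  · intro n t
    have hne : t.1.Nonempty := Finset.card_pos.1 (by rw [t.2.2]; omega)
    obtain ⟨V, hV⟩ := hne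
    exact ⟨V, t.2.1 hV, hWsub' n _ _ _ t V hV⟩
  · apply eq_univ_of_forall
    intro x
    have hx : x ∈ Xle ((Tx x).ncard) := by simp [hXle]
    exact hchaincov _ ((chain ((Tx x).ncard)).2.2 hx)


lemma pf_of_pu {X : Type} [TopologicalSpace X] (𝒰 : Set (Set X))
    {S : Type} (f : X → lp (fun _ : S => ℝ) 1) (hpu : IsPU f) (hsm : IsUSmall 𝒰 f) :
    ∃ 𝒱 : Set (Set X), IsOpenCover 𝒱 ∧ (∀ V ∈ 𝒱, ∃ U ∈ 𝒰, V ⊆ U) ∧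
      ∀ x : X, {V | V ∈ 𝒱 ∧ x ∈ V}.Finite := by
  rcases isEmpty_or_nonempty X with hE | hE
  · refine ⟨∅, ⟨by simp, ?_⟩, by simp, fun x => (hE.false x).elim⟩
    ext x
    exact (hE.false x).elim
  · haveI : Nonempty S := by
      obtain ⟨x⟩ := hE
      by_contra h
      rw [not_nonempty_iff] at h
      have h1 := (hpu.2 x).2
      have h0 : HasSum (fun s : S => f x s) 0 := hasSum_empty
      exact one_ne_zero (h1.unique h0)
    have hbdd : ∀ u : lp (fun _ : S => ℝ) 1, BddAbove (range fun s => u s) := by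
      intro u
      refine ⟨‖u‖, ?_⟩
      rintro r ⟨s, rfl⟩
      exact le_trans (le_abs_self _) (lp1_apply_abs_le u s)
    set M : lp (fun _ : S => ℝ) 1 → ℝ := fun u => ⨆ s, u s with hM
    have hMle : ∀ u v, M u ≤ M v + ‖u - v‖ := by
      intro u v
      refine ciSup_le fun s => ?_
      have h1 : u s = v s + (u s - v s) := by ring
      rw [h1]
      refine add_le_add (le_ciSup (hbdd v) s) ?_
      refine le_trans (le_abs_self _) ?_
      have : |(u - v) s| ≤ ‖u - v‖ := lp1_apply_abs_le (u - v) s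
      simpa [lp.coeFn_sub, Pi.sub_apply] using this
    have hMlip : LipschitzWith 1 M := by
      refine LipschitzWith.of_dist_le_mul fun u v => ?_
      rw [NNReal.coe_one, one_mul, Real.dist_eq, dist_eq_norm, abs_sub_le_iff]
      constructor
      · linarith [hMle u v]
      · have := hMle v u
        rw [← norm_neg (v - u)] at this
        simp only [neg_sub] at this
        linarith
    set m : X → ℝ := fun x => M (f x) with hm
    have hm_cont : Continuous m := hMlip.continuous.comp hpu.1
    have hm_pos : ∀ x, 0 < m x := by
      intro x
      obtain ⟨hnn, hsum⟩ := hpu.2 x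
      have hex : ∃ s, 0 < f x s := by
        by_contra h
        push_neg at h
        have hz : (fun s : S => f x s) = fun _ => 0 :=
          funext fun s => le_antisymm (h s) (hnn s)
        rw [hz] at hsum
        exact one_ne_zero (hsum.unique hasSum_zero)
      obtain ⟨s, hs⟩ := hex
      exact lt_of_lt_of_le hs (le_ciSup (hbdd (f x)) s)
    set V : S → Set X := fun s => {x | m x / 2 < f x s} with hV
    have hVopen : ∀ s, IsOpen (V s) := by
      intro s
      exact isOpen_lt (hm_cont.div_const 2) ((lp1_continuous_eval s).comp hpu.1)
    have hVmem : ∀ x, ∃ s, x ∈ V s := by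
      intro x
      have : m x / 2 < m x := by linarith [hm_pos x]
      obtain ⟨s, hs⟩ := exists_lt_of_lt_ciSup (by exact this : m x / 2 < ⨆ s, f x s)
      exact ⟨s, hs⟩
    have hVne : ∀ s, ∀ x ∈ V s, f x s ≠ 0 := by
      intro s x hx
      have h1 := hm_pos x
      simp only [hV, mem_setOf_eq] at hx
      have : 0 < f x s := by linarith
      exact ne_of_gt this
    refine ⟨range V, ⟨?_, ?_⟩, ?_, ?_⟩
    · rintro U ⟨s, rfl⟩
      exact hVopen s
    · apply eq_univ_of_forall
      intro x
      obtain ⟨s, hs⟩ := hVmem x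
      exact ⟨V s, ⟨s, rfl⟩, hs⟩
    · rintro U ⟨s, rfl⟩
      obtain ⟨U', hU', hsub⟩ := hsm s
      exact ⟨U', hU', fun x hx => hsub (hVne s x hx)⟩
    · intro x
      have hfin : {s | m x / 2 < f x s}.Finite := by
        have ht : Filter.Tendsto (fun s => f x s) Filter.cofinite (nhds 0) :=
          (hpu.2 x).2.summable.tendsto_cofinite_zero
        have hev : ∀ᶠ s in Filter.cofinite, f x s < m x / 2 :=
          ht.eventually_lt_const (by linarith [hm_pos x])
        have := Filter.eventually_cofinite.1 (hev.mono fun s h => not_lt.2 h.le)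
        simpa using this
      refine ((hfin.image V).subset ?_)
      rintro U ⟨⟨s, rfl⟩, hxU⟩
      exact ⟨s, hxU, rfl⟩

end Aux

/-- In a collectionwise normal space, an open cover admits a small partition of unity iff
it has a point-finite open refinement. -/
theorem stmt11 (X : Type) [TopologicalSpace X] (hX : CwNormal X)
    (𝒰 : Set (Set X)) (hcov : IsOpenCover 𝒰) :
    ExistsUSmallPU 𝒰 ↔
      ∃ 𝒱 : Set (Set X), IsOpenCover 𝒱 ∧ (∀ V ∈ 𝒱, ∃ U ∈ 𝒰, V ⊆ U) ∧
        ∀ x : X, {V | V ∈ 𝒱 ∧ x ∈ V}.Finite := by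
  constructor
  · rintro ⟨S, f, hpu, hsm⟩
    exact pf_of_pu 𝒰 f hpu hsm
  · rintro ⟨𝒱, ⟨hVo, hVcov⟩, hVref, hpf⟩
    obtain ⟨I, W, A, hWo, hAc, hAW, href, hWd, hcov⟩ := michael hX 𝒱 hVo hVcov hpf
    refine pu_of_sigma_discrete hX.normal 𝒰 I W A hWo hAc hAW ?_ hWd hcov
    intro n t
    obtain ⟨V, hV, hsub⟩ := href n t
    obtain ⟨U, hU, hVU⟩ := hVref V hV
    exact ⟨U, hU, hsub.trans hVU⟩
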